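/- arXiv:1305.6856 — 14 statements merged into one kernel-verified Lean document; each statement's English description precedes it below -/
import Mathlib

section
/- Every AG**-groupoid satisfies the paramedial law: (wx)(yz) = (zx)(yw) for all elements w, x, y, z. -/
/-- Every AG**-groupoid (a magma satisfying `(x*y)*z = (z*y)*x` and `x*(y*z) = y*(x*z)`)
satisfies the paramedial law `(w*x)*(y*z) = (z*x)*(y*w)`. -/
theorem paramedial_law {A : Type*} [Mul A]
    (hAG : ∀ x y z : A, x * y * z = z * y * x)
    (hStar : ∀ x y z : A, x * (y * z) = y * (x * z))
    (w x y z : A) :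
    (w * x) * (y * z) = (z * x) * (y * w) := by
  rw [hStar, hAG w x z, hStar]
end

section
/- In an AG**-groupoid A, for every idempotent e and all elements a, b, one has e(ab) = (ea)b. -/
/-- In an AG**-groupoid, for every idempotent `e` and all elements `a, b`,
one has `e*(a*b) = (e*a)*b`. -/
theorem idem_assoc {A : Type*} [Mul A]
    (hAG : ∀ x y z : A, x * y * z = z * y * x)
    (hStar : ∀ x y z : A, x * (y * z) = y * (x * z))
    (e : A) (he : e * e = e) (a b : A) :
    e * (a * b) = (e * a) * b := by
  calc e * (a * b) = (e * e) * (a * b) := by rw [he]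
    _ = a * ((e * e) * b) := hStar _ _ _
    _ = a * ((b * e) * e) := by rw [hAG e e b]
    _ = (b * e) * (a * e) := hStar _ _ _
    _ = ((a * e) * e) * b := hAG _ _ _
    _ = ((e * e) * a) * b := by rw [hAG a e e]
    _ = (e * a) * b := by rw [he]
end

section
/- In an AG**-groupoid, the set of idempotents is closed under multiplication and any two idempotents commute; hence the set of idempotents, if nonempty, forms a semilattice. -/
/-- In an AG**-groupoid, the set of idempotents is closed under multiplication and
any two idempotents commute; hence the idempotents form a semilattice. -/
theorem idempotents_semilattice {A : Type*} [Mul A]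
    (hAG : ∀ x y z : A, x * y * z = z * y * x)
    (hStar : ∀ x y z : A, x * (y * z) = y * (x * z))
    (e f : A) (he : e * e = e) (hf : f * f = f) :
    (e * f) * (e * f) = e * f ∧ e * f = f * e := by
  have medial : ∀ a b c d : A, (a * b) * (c * d) = (a * c) * (b * d) := by
    intro a b c d
    calc (a * b) * (c * d) = (c * d) * b * a := hAG _ _ _
      _ = (b * d) * c * a := by rw [hAG c d b]
      _ = (a * c) * (b * d) := hAG _ _ _
  have para : ∀ a b c d : A, (a * b) * (c * d) = (d * b) * (c * a) := by
    intro a b c d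
    calc (a * b) * (c * d) = c * ((a * b) * d) := hStar _ _ _
      _ = c * ((d * b) * a) := by rw [hAG a b d]
      _ = (d * b) * (c * a) := hStar _ _ _
  have h1 : (e * f) * (e * f) = e * f := by rw [medial, he, hf]
  refine ⟨h1, ?_⟩
  calc e * f = (e * f) * (e * f) := h1.symm
    _ = (f * f) * (e * e) := para _ _ _ _
    _ = f * e := by rw [he, hf]
end

section
/- Let A be an AG-groupoid with left identity e in which every element has a unique inverse. Then for all a, b in A the equation xa = b has a unique solution x (namely x = b·a^{-1}). -/
/-- In an AG-groupoid with left identity `e` in which every element has a unique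
inverse, the equation `x*a = b` has a unique solution for all `a, b`. -/
theorem unique_solution {A : Type*} [Mul A]
    (hAG : ∀ x y z : A, x * y * z = z * y * x)
    (e : A) (he : ∀ x : A, e * x = x)
    (hinv : ∀ a : A, ∃! i : A, i * a = e ∧ a * i = e)
    (a b : A) :
    ∃! x : A, x * a = b := by
  obtain ⟨i, ⟨hia, hai⟩, -⟩ := hinv a
  refine ⟨b * i, ?_, ?_⟩
  · show b * i * a = b
    rw [hAG, hai, he]
  · intro x hx
    rw [← hx, hAG, hia, he]
end

section
/- In a regular AG-groupoid, if a* is an inverse of a and b* is an inverse of b, then a*b* is an inverse of ab; that is, V(a)V(b) ⊆ V(ab). -/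
/-- In a regular AG-groupoid, if `a*` is an inverse of `a` and `b*` is an inverse of
`b`, then `a* * b*` is an inverse of `a*b`; that is, `V(a)V(b) ⊆ V(ab)`. -/
theorem inverses_multiply {A : Type*} [Mul A]
    (hAG : ∀ x y z : A, x * y * z = z * y * x)
    (hreg : ∀ a : A, ∃ x : A, (a * x) * a = a ∧ (x * a) * x = x)
    (a b astar bstar : A)
    (ha : (a * astar) * a = a ∧ (astar * a) * astar = astar)
    (hb : (b * bstar) * b = b ∧ (bstar * b) * bstar = bstar) :
    ((a * b) * (astar * bstar)) * (a * b) = a * b ∧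
    ((astar * bstar) * (a * b)) * (astar * bstar) = astar * bstar := by
  have medial : ∀ x y z w : A, (x * y) * (z * w) = (x * z) * (y * w) := by
    intro x y z w
    calc (x * y) * (z * w) = (z * w) * y * x := hAG _ _ _
      _ = (y * w) * z * x := by rw [hAG z w y]
      _ = (x * z) * (y * w) := hAG _ _ _
  constructor
  · rw [medial a b astar bstar, medial (a * astar) (b * bstar) a b, ha.1, hb.1]
  · rw [medial astar bstar a b, medial (astar * a) (bstar * b) astar bstar, ha.2, hb.2]
end

section
/- A completely inverse AG**-groupoid containing exactly one idempotent is an AG-group: the unique idempotent e = aa^{-1} is a left identity. -/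
/-- A completely inverse AG**-groupoid containing exactly one idempotent is an
AG-group: the unique idempotent `e` equals `a * a⁻¹` for every `a` and is a left
identity. -/
theorem unique_idempotent_ag_group {A : Type*} [Mul A] (inv : A → A)
(hAG : ∀ x y z : A, x * y * z = z * y * x)
    (hStar : ∀ x y z : A, x * (y * z) = y * (x * z))
    (hinv1 : ∀ a : A, (a * inv a) * a = a)
    (hinv2 : ∀ a : A, (inv a * a) * inv a = inv a)
    (hcomm : ∀ a : A, a * inv a = inv a * a)
    (huniq : ∀ a b : A, (a * b) * a = a → (b * a) * b = b → b = inv a)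
    (e : A) (hee : e * e = e) (he : ∀ g : A, g * g = g → g = e) :
    (∀ a : A, a * inv a = e) ∧ (∀ a : A, e * a = a) := by
  have key : ∀ a : A, a * inv a = e := by
    intro a
    apply he
    calc (a * inv a) * (a * inv a) = a * ((a * inv a) * inv a) := hStar _ _ _
      _ = a * ((inv a * a) * inv a) := by rw [hcomm]
      _ = a * inv a := by rw [hinv2]
  refine ⟨key, fun a => ?_⟩
  rw [← key a]; exact hinv1 a
end

section
/- Completely inverse AG**-groupoids are idempotent-surjective: for every congruence ρ on a completely inverse AG**-groupoid A and every a in A with (a, a²) ∈ ρ, the ρ-class of a contains an idempotent of A. Concretely, e = a(xa) is an idempotent ρ-related to a, where x is the inverse of a². -/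
/-- Completely inverse AG**-groupoids are idempotent-surjective: if `ρ` is a
congruence and `(a, a²) ∈ ρ`, then `e = a*(x*a)` with `x = (a²)⁻¹` is an
idempotent `ρ`-related to `a`. -/
theorem idempotent_surjective {A : Type*} [Mul A] (inv : A → A)
(hAG : ∀ x y z : A, x * y * z = z * y * x)
    (hStar : ∀ x y z : A, x * (y * z) = y * (x * z))
    (hinv1 : ∀ a : A, (a * inv a) * a = a)
    (hinv2 : ∀ a : A, (inv a * a) * inv a = inv a)
    (hcomm : ∀ a : A, a * inv a = inv a * a)
    (huniq : ∀ a b : A, (a * b) * a = a → (b * a) * b = b → b = inv a)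
    (r : A → A → Prop) (hequiv : Equivalence r)
    (hcompat : ∀ a b c d : A, r a b → r c d → r (a * c) (b * d))
    (a : A) (ha : r a (a * a)) :
    (a * (inv (a * a) * a)) * (a * (inv (a * a) * a)) = a * (inv (a * a) * a) ∧
    r a (a * (inv (a * a) * a)) := by
  set b := a * a with hb
  set x := inv b with hx
  -- medial law
  have hmed : ∀ p q u v : A, (p * q) * (u * v) = (p * u) * (q * v) := by
    intro p q u v
    rw [hAG p q (u * v), hAG u v q, hAG (q * v) u p]
  -- e = a*(x*a) = x*b
  have heq1 : a * (x * a) = x * b := by rw [hStar a x a]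
  -- (x*b)*b = b
  have hxbb : (x * b) * b = b := by
    rw [← hcomm b]; exact hinv1 b
  -- idempotency
  have hidem : (x * b) * (x * b) = x * b := by
    rw [hStar (x * b) x b, hxbb]
  -- (x*b)*a = b*(x*a)
  have heq2 : (x * b) * a = b * (x * a) := by
    rw [← hcomm b, hAG b x a, hb, hmed a x a a]
  -- relation chain
  have h2 : r ((x * b) * a) b := by
    have := hcompat (x * b) (x * b) a b (hequiv.refl _) ha
    rwa [hxbb] at this
  have h3 : r a ((x * b) * a) := hequiv.trans ha (hequiv.symm h2)
  have h4 : r (b * (x * a)) (a * (x * a)) :=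
    hcompat b a (x * a) (x * a) (hequiv.symm ha) (hequiv.refl _)
  have h5 : r a (a * (x * a)) := by
    rw [heq2] at h3
    exact hequiv.trans h3 h4
  refine ⟨?_, h5⟩
  rw [heq1, hidem]
end

section
/- On a completely inverse AG**-groupoid A, the relation μ defined by (a,b) ∈ μ iff aa^{-1} = bb^{-1} is a congruence on A, and the quotient A/μ is a semilattice (commutative and idempotent). -/
/-- On a completely inverse AG**-groupoid, the relation `μ` given by
`a*a⁻¹ = b*b⁻¹` is a congruence whose quotient is a semilattice. -/
theorem mu_semilattice_congruence {A : Type*} [Mul A] (inv : A → A)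
(hAG : ∀ x y z : A, x * y * z = z * y * x)
    (hStar : ∀ x y z : A, x * (y * z) = y * (x * z))
    (hinv1 : ∀ a : A, (a * inv a) * a = a)
    (hinv2 : ∀ a : A, (inv a * a) * inv a = inv a)
    (hcomm : ∀ a : A, a * inv a = inv a * a)
    (huniq : ∀ a b : A, (a * b) * a = a → (b * a) * b = b → b = inv a)
    :
    (∀ a b c d : A, a * inv a = b * inv b → c * inv c = d * inv d →
      (a * c) * inv (a * c) = (b * d) * inv (b * d)) ∧
    (∀ a b : A, (a * b) * inv (a * b) = (b * a) * inv (b * a)) ∧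
    (∀ a : A, (a * a) * inv (a * a) = a * inv a) := by
  -- medial law
  have med : ∀ a b c d : A, (a * b) * (c * d) = (a * c) * (b * d) := by
    intro a b c d
    calc (a * b) * (c * d) = ((c * d) * b) * a := hAG _ _ _
      _ = ((b * d) * c) * a := by rw [hAG c d b]
      _ = (a * c) * (b * d) := hAG _ _ _
  -- paramedial law
  have par : ∀ a b c d : A, (a * b) * (c * d) = (d * b) * (c * a) := by
    intro a b c d
    calc (a * b) * (c * d) = c * ((a * b) * d) := by rw [hStar]
      _ = c * ((d * b) * a) := by rw [hAG a b d]
      _ = (d * b) * (c * a) := by rw [hStar]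
  -- a * inv a is idempotent
  have idem : ∀ a : A, (a * inv a) * (a * inv a) = a * inv a := by
    intro a
    have h1 : (a * inv a) * (a * inv a) = ((a * inv a) * inv a) * a :=
      hAG a (inv a) (a * inv a)
    have h2 : (a * inv a) * inv a = inv a := by
      rw [hcomm]; exact hinv2 a
    rw [h1, h2, ← hcomm]
  -- inv of a product
  have invmul : ∀ a b : A, inv (a * b) = inv a * inv b := by
    intro a b
    have h1 : ((a * b) * (inv a * inv b)) * (a * b) = a * b := by
      rw [med a b (inv a) (inv b), med (a * inv a) (b * inv b) a b,
        hinv1 a, hinv1 b]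
    have h2 : ((inv a * inv b) * (a * b)) * (inv a * inv b) = inv a * inv b := by
      rw [med (inv a) (inv b) a b, med (inv a * a) (inv b * b) (inv a) (inv b),
        hinv2 a, hinv2 b]
    exact (huniq (a * b) (inv a * inv b) h1 h2).symm
  -- key: (ab)(ab)⁻¹ = (aa⁻¹)(bb⁻¹)
  have key : ∀ a b : A, (a * b) * inv (a * b) = (a * inv a) * (b * inv b) := by
    intro a b
    rw [invmul, med]
  refine ⟨?_, ?_, ?_⟩
  · intro a b c d hab hcd
    rw [key, key, hab, hcd]
  · intro a b
    rw [key, key]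
    calc (a * inv a) * (b * inv b)
        = ((a * inv a) * (a * inv a)) * ((b * inv b) * (b * inv b)) := by
          rw [idem, idem]
      _ = ((b * inv b) * (a * inv a)) * ((b * inv b) * (a * inv a)) :=
          par _ _ _ _
      _ = ((b * inv b) * (b * inv b)) * ((a * inv a) * (a * inv a)) :=
          med _ _ _ _
      _ = (b * inv b) * (a * inv a) := by rw [idem, idem]
  · intro a
    rw [key, idem]
end

section
/- In a completely inverse AG**-groupoid, the relation μ given by aa^{-1} = bb^{-1} is the maximum idempotent-separating congruence: every congruence ρ such that distinct idempotents are never ρ-related is contained in μ. -/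
/-- In a completely inverse AG**-groupoid, `μ` (given by `a*a⁻¹ = b*b⁻¹`) is the
maximum idempotent-separating congruence: every idempotent-separating congruence is
contained in `μ`. -/
theorem mu_maximum_idempotent_separating {A : Type*} [Mul A] (inv : A → A)
(hAG : ∀ x y z : A, x * y * z = z * y * x)
    (hStar : ∀ x y z : A, x * (y * z) = y * (x * z))
    (hinv1 : ∀ a : A, (a * inv a) * a = a)
    (hinv2 : ∀ a : A, (inv a * a) * inv a = inv a)
    (hcomm : ∀ a : A, a * inv a = inv a * a)
    (huniq : ∀ a b : A, (a * b) * a = a → (b * a) * b = b → b = inv a)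
    (r : A → A → Prop) (hequiv : Equivalence r)
    (hcompat : ∀ a b c d : A, r a b → r c d → r (a * c) (b * d))
    (hsep : ∀ e f : A, e * e = e → f * f = f → r e f → e = f)
    (a b : A) (hab : r a b) :
    a * inv a = b * inv b := by
  obtain ⟨hrefl, hsymm, htrans⟩ := hequiv
  -- medial law
  have med : ∀ x y z w : A, (x * y) * (z * w) = (x * z) * (y * w) := by
    intro x y z w
    rw [hAG x y (z * w), hAG z w y, hAG (y * w) z x]
  -- (x * x⁻¹) * x⁻¹ = x⁻¹
  have einv : ∀ x : A, (x * inv x) * inv x = inv x := by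
    intro x; rw [hcomm, hinv2]
  -- x * x⁻¹ is idempotent
  have eid : ∀ x : A, (x * inv x) * (x * inv x) = x * inv x := by
    intro x
    rw [hAG x (inv x) (x * inv x), einv, ← hcomm]
  -- inv (inv x) = x
  have invinv : ∀ x : A, inv (inv x) = x := fun x =>
    (huniq (inv x) x (hinv2 x) (hinv1 x)).symm
  -- inv (x * y) = inv x * inv y
  have invmul : ∀ x y : A, inv (x * y) = inv x * inv y := by
    intro x y
    refine (huniq (x * y) (inv x * inv y) ?_ ?_).symm
    · rw [med x y (inv x) (inv y), med (x * inv x) (y * inv y) x y, hinv1, hinv1]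
    · rw [med (inv x) (inv y) x y, ← hcomm x, ← hcomm y,
        med (x * inv x) (y * inv y) (inv x) (inv y), einv, einv]
  -- product of idempotents is idempotent
  have idemmul : ∀ e f : A, e * e = e → f * f = f → (e * f) * (e * f) = e * f := by
    intro e f he hf; rw [med, he, hf]
  -- (e*f)*e = f*e for idempotent e
  have eff : ∀ e f : A, e * e = e → (e * f) * e = f * e := by
    intro e f he
    have h : (e * f) * e = (e * f) * (e * e) := by rw [he]
    rw [h, med e f e e, he, hStar e f e, he]
  set e := a * inv a with hedef
  set f := b * inv b with hfdef
  have he : e * e = e := eid a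
  have hf : f * f = f := eid b
  -- r e (inv a * b)  and  r f (inv b * a)
  have h1 : r e (inv a * b) := by
    rw [hedef, hcomm]
    exact hcompat _ _ _ _ (hrefl _) hab
  have h2 : r f (inv b * a) := by
    rw [hfdef, hcomm]
    exact hcompat _ _ _ _ (hrefl _) (hsymm hab)
  -- First side: e = f * e
  have hEfe : e = f * e := by
    set z := inv a * b with hzdef
    have hinvz : inv z = a * inv b := by rw [hzdef, invmul, invinv]
    have hzf : r (inv z) f := by
      rw [hinvz, hfdef]
      exact hcompat _ _ _ _ hab (hrefl _)
    have hk : r (z * inv z) (e * f) := hcompat _ _ _ _ (hsymm h1) hzf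
    have hkef : z * inv z = e * f := hsep _ _ (eid z) (idemmul e f he hf) hk
    have h3 : r ((e * f) * z) ((e * f) * e) := hcompat _ _ _ _ (hrefl _) (hsymm h1)
    rw [eff e f he] at h3
    have h4 : (e * f) * z = z := by rw [← hkef]; exact hinv1 z
    rw [h4] at h3
    exact hsep _ _ he (idemmul f e hf he) (htrans h1 h3)
  -- Second side: f = e * f
  have hFef : f = e * f := by
    set w := inv b * a with hwdef
    have hinvw : inv w = b * inv a := by rw [hwdef, invmul, invinv]
    have hwe : r (inv w) e := by
      rw [hinvw, hedef]
      exact hcompat _ _ _ _ (hsymm hab) (hrefl _)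
    have hk : r (w * inv w) (f * e) := hcompat _ _ _ _ (hsymm h2) hwe
    have hkfe : w * inv w = f * e := hsep _ _ (eid w) (idemmul f e hf he) hk
    have h3 : r ((f * e) * w) ((f * e) * f) := hcompat _ _ _ _ (hrefl _) (hsymm h2)
    rw [eff f e hf] at h3
    have h4 : (f * e) * w = w := by rw [← hkfe]; exact hinv1 w
    rw [h4] at h3
    exact hsep _ _ hf (idemmul e f he hf) (htrans h2 h3)
  calc e = f * e := hEfe
    _ = (f * f) * e := by rw [hf]
    _ = (e * f) * f := hAG f f e
    _ = f * f := by rw [← hFef]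
    _ = f := hf
end

section
/- If ρ₁ and ρ₂ are idempotent-separating congruences on a completely inverse AG**-groupoid A, then ρ₁ and ρ₂ commute as relations: ρ₁∘ρ₂ = ρ₂∘ρ₁. -/
section Aux
variable {A : Type*} [Mul A]

/-- In an AG**-groupoid, idempotents commute. -/
lemma ag_idem_comm (hAG : ∀ x y z : A, x * y * z = z * y * x)
    (hStar : ∀ x y z : A, x * (y * z) = y * (x * z))
    {e f : A} (he : e * e = e) (hf : f * f = f) : e * f = f * e := by
  have h1 : e * f = (f * e) * e := by rw [hAG f e e, he]
  have h2 : f * e = (e * f) * f := by rw [hAG e f f, hf]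
  have h3 : e * f = (e * f) * (e * f) := by
    calc e * f = ((e * f) * f) * e := by rw [← h2, ← h1]
    _ = (e * f) * (e * f) := by rw [hAG (e * f) f e]
  have h4 : (e * f) * (e * f) = f * e := by
    calc (e * f) * (e * f) = e * ((e * f) * f) := hStar _ _ _
    _ = e * ((f * f) * e) := by rw [hAG e f f]
    _ = e * (f * e) := by rw [hf]
    _ = f * (e * e) := hStar _ _ _
    _ = f * e := by rw [he]
  rw [h3, h4]

/-- `a * a⁻¹` is idempotent. -/
lemma ag_idem (inv : A → A)
    (hStar : ∀ x y z : A, x * (y * z) = y * (x * z))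
    (hinv2 : ∀ a : A, (inv a * a) * inv a = inv a)
    (hcomm : ∀ a : A, a * inv a = inv a * a)
    (a : A) : (a * inv a) * (a * inv a) = a * inv a := by
  have h1 : (a * inv a) * (a * inv a) = a * ((a * inv a) * inv a) := hStar _ _ _
  have h2 : (a * inv a) * inv a = inv a := by rw [hcomm a]; exact hinv2 a
  rw [h1, h2]

/-- Key lemma: an idempotent-separating congruence identifies `a * a⁻¹` with `c * c⁻¹`. -/
lemma ag_key (inv : A → A)
    (hAG : ∀ x y z : A, x * y * z = z * y * x)
    (hStar : ∀ x y z : A, x * (y * z) = y * (x * z))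
    (hinv1 : ∀ a : A, (a * inv a) * a = a)
    (hinv2 : ∀ a : A, (inv a * a) * inv a = inv a)
    (hcomm : ∀ a : A, a * inv a = inv a * a)
    (r : A → A → Prop) (hequiv : Equivalence r)
    (hcompat : ∀ a b c d : A, r a b → r c d → r (a * c) (b * d))
    (hsep : ∀ e f : A, e * e = e → f * f = f → r e f → e = f)
    {a c : A} (h : r a c) : a * inv a = c * inv c := by
  set e := a * inv a with he_def
  set f := c * inv c with hf_def
  have he : e * e = e := ag_idem inv hStar hinv2 hcomm a
  have hf : f * f = f := ag_idem inv hStar hinv2 hcomm c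
  -- r a (f * a)
  have hfa : r a (f * a) := by
    have h1 : r (f * a) (f * c) := hcompat _ _ _ _ (hequiv.refl f) h
    have h2 : f * c = c := hinv1 c
    rw [h2] at h1
    exact hequiv.trans h (hequiv.symm h1)
  -- r c (e * c)
  have hec : r c (e * c) := by
    have h1 : r (e * a) (e * c) := hcompat _ _ _ _ (hequiv.refl e) h
    have h2 : e * a = a := hinv1 a
    rw [h2] at h1
    exact hequiv.trans (hequiv.symm h) h1
  -- r e (f * e)
  have step1 : r e (f * e) := by
    have h1 : r (inv a * a) (inv a * (f * a)) := hcompat _ _ _ _ (hequiv.refl (inv a)) hfa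
    have h2 : inv a * (f * a) = f * (inv a * a) := hStar _ _ _
    rw [h2] at h1
    have h3 : e = inv a * a := by rw [he_def]; exact hcomm a
    rw [h3]
    exact h1
  -- r f (e * f)
  have step2 : r f (e * f) := by
    have h1 : r (inv c * c) (inv c * (e * c)) := hcompat _ _ _ _ (hequiv.refl (inv c)) hec
    have h2 : inv c * (e * c) = e * (inv c * c) := hStar _ _ _
    rw [h2] at h1
    have h3 : f = inv c * c := by rw [hf_def]; exact hcomm c
    rw [h3]
    exact h1
  have hcom : e * f = f * e := ag_idem_comm hAG hStar he hf
  have hef : r e f := by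
    rw [← hcom] at step1
    exact hequiv.trans step1 (hequiv.symm step2)
  exact hsep e f he hf hef

/-- One direction of the commuting lemma. -/
lemma ag_half (inv : A → A)
    (hAG : ∀ x y z : A, x * y * z = z * y * x)
    (hStar : ∀ x y z : A, x * (y * z) = y * (x * z))
    (hinv1 : ∀ a : A, (a * inv a) * a = a)
    (hinv2 : ∀ a : A, (inv a * a) * inv a = inv a)
    (hcomm : ∀ a : A, a * inv a = inv a * a)
    (r₁ r₂ : A → A → Prop) (hequiv₁ : Equivalence r₁) (hequiv₂ : Equivalence r₂)
    (hcompat₁ : ∀ a b c d : A, r₁ a b → r₁ c d → r₁ (a * c) (b * d))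
    (hcompat₂ : ∀ a b c d : A, r₂ a b → r₂ c d → r₂ (a * c) (b * d))
    (hsep₁ : ∀ e f : A, e * e = e → f * f = f → r₁ e f → e = f)
    (hsep₂ : ∀ e f : A, e * e = e → f * f = f → r₂ e f → e = f)
    {a b c : A} (h1 : r₁ a c) (h2 : r₂ c b) :
    ∃ d : A, r₂ a d ∧ r₁ d b := by
  have eq1 : a * inv a = c * inv c :=
    ag_key inv hAG hStar hinv1 hinv2 hcomm r₁ hequiv₁ hcompat₁ hsep₁ h1
  have eq2 : c * inv c = b * inv b :=
    ag_key inv hAG hStar hinv1 hinv2 hcomm r₂ hequiv₂ hcompat₂ hsep₂ h2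
  refine ⟨(a * inv c) * b, ?_, ?_⟩
  · -- r₂ a ((a * inv c) * b)
    have h3 : r₂ ((a * inv c) * c) ((a * inv c) * b) :=
      hcompat₂ _ _ _ _ (hequiv₂.refl _) h2
    have h4 : (a * inv c) * c = a := by
      rw [hAG a (inv c) c, ← eq1]; exact hinv1 a
    rw [h4] at h3
    exact h3
  · -- r₁ ((a * inv c) * b) b
    have h3 : r₁ (a * inv c) (c * inv c) := hcompat₁ _ _ _ _ h1 (hequiv₁.refl _)
    have h4 : r₁ ((a * inv c) * b) ((c * inv c) * b) :=
      hcompat₁ _ _ _ _ h3 (hequiv₁.refl b)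
    have h5 : (c * inv c) * b = b := by rw [eq2]; exact hinv1 b
    rw [h5] at h4
    exact h4

end Aux

/-- Idempotent-separating congruences on a completely inverse AG**-groupoid
commute as relations: `ρ₁∘ρ₂ = ρ₂∘ρ₁`. -/
theorem idempotent_separating_commute {A : Type*} [Mul A] (inv : A → A)
(hAG : ∀ x y z : A, x * y * z = z * y * x)
    (hStar : ∀ x y z : A, x * (y * z) = y * (x * z))
    (hinv1 : ∀ a : A, (a * inv a) * a = a)
    (hinv2 : ∀ a : A, (inv a * a) * inv a = inv a)
    (hcomm : ∀ a : A, a * inv a = inv a * a)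
    (huniq : ∀ a b : A, (a * b) * a = a → (b * a) * b = b → b = inv a)
    (r₁ r₂ : A → A → Prop) (hequiv₁ : Equivalence r₁) (hequiv₂ : Equivalence r₂)
    (hcompat₁ : ∀ a b c d : A, r₁ a b → r₁ c d → r₁ (a * c) (b * d))
    (hcompat₂ : ∀ a b c d : A, r₂ a b → r₂ c d → r₂ (a * c) (b * d))
    (hsep₁ : ∀ e f : A, e * e = e → f * f = f → r₁ e f → e = f)
    (hsep₂ : ∀ e f : A, e * e = e → f * f = f → r₂ e f → e = f)
    (a b : A) :
    (∃ c : A, r₁ a c ∧ r₂ c b) ↔ (∃ c : A, r₂ a c ∧ r₁ c b) := by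
  constructor
  · rintro ⟨c, h1, h2⟩
    exact ag_half inv hAG hStar hinv1 hinv2 hcomm r₁ r₂ hequiv₁ hequiv₂
      hcompat₁ hcompat₂ hsep₁ hsep₂ h1 h2
  · rintro ⟨c, h1, h2⟩
    exact ag_half inv hAG hStar hinv1 hinv2 hcomm r₂ r₁ hequiv₂ hequiv₁
      hcompat₂ hcompat₁ hsep₂ hsep₁ h1 h2
end

section
/- In a completely inverse AG**-groupoid A, the natural partial order defined by a ≤ b iff a = eb for some idempotent e is a partial order on A that is compatible with multiplication (a ≤ b and c ≤ d imply ac ≤ bd) and with inverses (a ≤ b implies a^{-1} ≤ b^{-1}). -/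
/-- In a completely inverse AG**-groupoid, the natural partial order
`a ≤ b ↔ ∃ idempotent e, a = e*b` is a partial order compatible with
multiplication and inverses. -/
theorem natural_partial_order {A : Type*} [Mul A] (inv : A → A)
(hAG : ∀ x y z : A, x * y * z = z * y * x)
    (hStar : ∀ x y z : A, x * (y * z) = y * (x * z))
    (hinv1 : ∀ a : A, (a * inv a) * a = a)
    (hinv2 : ∀ a : A, (inv a * a) * inv a = inv a)
    (hcomm : ∀ a : A, a * inv a = inv a * a)
    (huniq : ∀ a b : A, (a * b) * a = a → (b * a) * b = b → b = inv a)
    :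
    (∀ a : A, ∃ e : A, e * e = e ∧ a = e * a) ∧
    (∀ a b : A, (∃ e : A, e * e = e ∧ a = e * b) →
      (∃ f : A, f * f = f ∧ b = f * a) → a = b) ∧
    (∀ a b c : A, (∃ e : A, e * e = e ∧ a = e * b) →
      (∃ f : A, f * f = f ∧ b = f * c) → ∃ g : A, g * g = g ∧ a = g * c) ∧
    (∀ a b c d : A, (∃ e : A, e * e = e ∧ a = e * b) →
      (∃ f : A, f * f = f ∧ c = f * d) →
      ∃ g : A, g * g = g ∧ a * c = g * (b * d)) ∧
    (∀ a b : A, (∃ e : A, e * e = e ∧ a = e * b) →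
      ∃ g : A, g * g = g ∧ inv a = g * inv b) := by
  -- medial law
  have med : ∀ a b c d : A, (a * b) * (c * d) = (a * c) * (b * d) := by
    intro a b c d
    calc (a * b) * (c * d) = ((c * d) * b) * a := hAG _ _ _
      _ = ((b * d) * c) * a := by rw [hAG c d b]
      _ = (a * c) * (b * d) := hAG _ _ _
  -- if a = e*b with e idempotent, then e*a = a
  have absorb : ∀ e b : A, e * e = e → e * (e * b) = e * b := by
    intro e b he
    calc e * (e * b) = e * (((e * e) * b)) := by rw [he]
      _ = e * ((b * e) * e) := by rw [hAG e e b]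
      _ = (b * e) * (e * e) := hStar _ _ _
      _ = (b * e) * e := by rw [he]
      _ = (e * e) * b := hAG _ _ _
      _ = e * b := by rw [he]
  refine ⟨?_, ?_, ?_, ?_, ?_⟩
  · -- reflexivity
    intro a
    refine ⟨a * inv a, ?_, (hinv1 a).symm⟩
    calc (a * inv a) * (a * inv a) = (a * inv a) * (inv a * a) := by rw [hcomm]
      _ = ((inv a * a) * inv a) * a := hAG _ _ _
      _ = inv a * a := by rw [hinv2]
      _ = a * inv a := (hcomm a).symm
  · -- antisymmetry
    rintro a b ⟨e, he, hab⟩ ⟨f, hf, hba⟩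
    calc a = e * b := hab
      _ = e * (f * a) := by rw [← hba]
      _ = f * (e * a) := hStar _ _ _
      _ = f * (e * (e * b)) := by rw [hab]
      _ = f * (e * b) := by rw [absorb e b he]
      _ = f * a := by rw [← hab]
      _ = b := hba.symm
  · -- transitivity
    rintro a b c ⟨e, he, hab⟩ ⟨f, hf, hbc⟩
    refine ⟨f * e, ?_, ?_⟩
    · calc (f * e) * (f * e) = (f * f) * (e * e) := med _ _ _ _
        _ = f * e := by rw [he, hf]
    · calc a = e * b := hab
        _ = e * (f * c) := by rw [← hbc]
        _ = e * ((f * f) * c) := by rw [hf]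
        _ = e * ((c * f) * f) := by rw [hAG f f c]
        _ = (c * f) * (e * f) := hStar _ _ _
        _ = (c * e) * (f * f) := med _ _ _ _
        _ = (c * e) * f := by rw [hf]
        _ = (f * e) * c := hAG _ _ _
  · -- compatibility with multiplication
    rintro a b c d ⟨e, he, hab⟩ ⟨f, hf, hcd⟩
    refine ⟨e * f, ?_, ?_⟩
    · calc (e * f) * (e * f) = (e * e) * (f * f) := med _ _ _ _
        _ = e * f := by rw [he, hf]
    · calc a * c = (e * b) * (f * d) := by rw [← hab, ← hcd]
        _ = (e * f) * (b * d) := med _ _ _ _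
  · -- compatibility with inverses
    rintro a b ⟨e, he, hab⟩
    refine ⟨e, he, ?_⟩
    have h1 : (a * (e * inv b)) * a = a := by
      calc (a * (e * inv b)) * a = ((e * b) * (e * inv b)) * (e * b) := by rw [← hab]
        _ = ((e * e) * (b * inv b)) * (e * b) := by rw [med e b e (inv b)]
        _ = (e * (b * inv b)) * (e * b) := by rw [he]
        _ = (e * e) * ((b * inv b) * b) := med _ _ _ _
        _ = e * ((b * inv b) * b) := by rw [he]
        _ = e * b := by rw [hinv1]
        _ = a := hab.symm
    have h2 : ((e * inv b) * a) * (e * inv b) = e * inv b := by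
      calc ((e * inv b) * a) * (e * inv b) = ((e * inv b) * (e * b)) * (e * inv b) := by
            rw [← hab]
        _ = ((e * e) * (inv b * b)) * (e * inv b) := by rw [med e (inv b) e b]
        _ = (e * (inv b * b)) * (e * inv b) := by rw [he]
        _ = (e * e) * ((inv b * b) * inv b) := med _ _ _ _
        _ = e * ((inv b * b) * inv b) := by rw [he]
        _ = e * inv b := by rw [hinv2]
    exact (huniq a (e * inv b) h1 h2).symm
end

section
/- In a completely inverse AG**-groupoid, if ab is idempotent then ab = ba. -/
/-- In a completely inverse AG**-groupoid, if `a*b` is idempotent then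
`a*b = b*a`. -/
theorem idempotent_product_comm {A : Type*} [Mul A] (inv : A → A)
(hAG : ∀ x y z : A, x * y * z = z * y * x)
    (hStar : ∀ x y z : A, x * (y * z) = y * (x * z))
    (hinv1 : ∀ a : A, (a * inv a) * a = a)
    (hinv2 : ∀ a : A, (inv a * a) * inv a = inv a)
    (hcomm : ∀ a : A, a * inv a = inv a * a)
    (huniq : ∀ a b : A, (a * b) * a = a → (b * a) * b = b → b = inv a)
    (a b : A) (h : (a * b) * (a * b) = a * b) :
    a * b = b * a := by
  calc a * b = (a * b) * (a * b) := h.symm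
    _ = (a * ((b * inv b) * b)) * (a * b) := by rw [hinv1 b]
    _ = ((b * inv b) * (a * b)) * (a * b) := by rw [hStar a (b * inv b) b]
    _ = ((a * b) * (a * b)) * (b * inv b) := by
        rw [hAG (b * inv b) (a * b) (a * b)]
    _ = (a * b) * (b * inv b) := by rw [h]
    _ = ((b * inv b) * b) * a := by rw [hAG a b (b * inv b)]
    _ = b * a := by rw [hinv1 b]
end

section
/- Let ρ be a congruence on a completely inverse AG**-groupoid A. Then (a,b) ∈ ρ if and only if (aa^{-1}, bb^{-1}) ∈ ρ and ab^{-1} is ρ-related to some idempotent of A. Consequently, every congruence on A is uniquely determined by its kernel and trace. -/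
section Aux
variable {B : Type*} [Mul B]

theorem myMedial (hL : ∀ x y z : B, x * y * z = z * y * x) (a b c d : B) :
    (a * b) * (c * d) = (a * c) * (b * d) := by
  calc (a*b)*(c*d) = ((c*d)*b)*a := hL a b (c*d)
    _ = ((b*d)*c)*a := by rw [hL c d b]
    _ = (a*c)*(b*d) := hL (b*d) c a

theorem myIdem (hL : ∀ x y z : B, x * y * z = z * y * x) {a x : B}
    (h1 : (a*x)*a = a) (h3 : a*x = x*a) : (a*x)*(a*x) = a*x := by
  have : a*x = (a*x)*(a*x) := by
    calc a*x = ((a*x)*a)*x := by rw [h1]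
      _ = (x*a)*(a*x) := hL (a*x) a x
      _ = (a*x)*(a*x) := by rw [← h3]
  exact this.symm

theorem myUniq (hL : ∀ x y z : B, x * y * z = z * y * x) {a x y : B}
    (h1 : (a*x)*a = a) (h2 : (x*a)*x = x) (h3 : a*x = x*a)
    (k1 : (a*y)*a = a) (k2 : (y*a)*y = y) (k3 : a*y = y*a) : x = y := by
  have hff := myIdem hL k1 k3
  have hef : a*x = (a*x)*(a*y) := by
    have step : ((a*y)*a)*x = (a*x)*(a*y) := by
      calc ((a*y)*a)*x = (x*a)*(a*y) := hL (a*y) a x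
        _ = (a*x)*(a*y) := by rw [← h3]
    calc a*x = ((a*y)*a)*x := by rw [k1]
      _ = (a*x)*(a*y) := step
  have hfe : a*y = (a*y)*(a*x) := by
    calc a*y = ((a*x)*a)*y := by rw [h1]
      _ = (y*a)*(a*x) := hL (a*x) a y
      _ = (a*y)*(a*x) := by rw [← k3]
  have comm : (a*x)*(a*y) = (a*y)*(a*x) := by
    calc (a*x)*(a*y) = ((a*x)*(a*y))*(a*y) := by nth_rewrite 1 [hef]; rfl
      _ = ((a*y)*(a*y))*(a*x) := hL (a*x) (a*y) (a*y)
      _ = (a*y)*(a*x) := by rw [hff]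
  have hEF : a*x = a*y := hef.trans (comm.trans hfe.symm)
  calc x = (x*a)*x := h2.symm
    _ = (a*x)*x := by rw [← h3]
    _ = (a*y)*x := by rw [hEF]
    _ = (y*a)*x := by rw [k3]
    _ = (x*a)*y := hL y a x
    _ = (a*x)*y := by rw [← h3]
    _ = (a*y)*y := by rw [hEF]
    _ = (y*a)*y := by rw [k3]
    _ = y := k2

theorem myKey (hL : ∀ x y z : B, x * y * z = z * y * x) {a b x y : B}
    (ha1 : (a*x)*a = a) (ha3 : a*x = x*a)
    (hb1 : (b*y)*b = b) (hb3 : b*y = y*b)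
    (he : a*x = b*y) (hg : (a*y)*(a*y) = a*y) : a = b := by
  have hee := myIdem hL ha1 ha3
  have hA : a = (a*y)*b := by
    calc a = (a*x)*a := ha1.symm
      _ = (b*y)*a := by rw [he]
      _ = (a*y)*b := hL b y a
  have hB : a*y = (a*x)*(a*y) := by
    calc a*y = ((a*y)*b)*y := by nth_rewrite 1 [hA]; rfl
      _ = (y*b)*(a*y) := hL (a*y) b y
      _ = (b*y)*(a*y) := by rw [← hb3]
      _ = (a*x)*(a*y) := by rw [← he]
  have hC : a*x = (x*b)*(a*y) := by
    calc a*x = ((a*y)*b)*x := by nth_rewrite 1 [hA]; rfl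
      _ = (x*b)*(a*y) := hL (a*y) b x
  have hD : (a*y)*(x*b) = a*x := by
    calc (a*y)*(x*b) = (a*x)*(y*b) := myMedial hL a y x b
      _ = (a*x)*(b*y) := by rw [← hb3]
      _ = (a*x)*(a*x) := by rw [← he]
      _ = a*x := hee
  have hE : a*y = a*x := by
    calc a*y = (a*x)*(a*y) := hB
      _ = ((x*b)*(a*y))*(a*y) := by nth_rewrite 1 [hC]; rfl
      _ = ((a*y)*(a*y))*(x*b) := hL (x*b) (a*y) (a*y)
      _ = (a*y)*(x*b) := by rw [hg]
      _ = a*x := hD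
  calc a = (a*y)*b := hA
    _ = (a*x)*b := by rw [hE]
    _ = (b*y)*b := by rw [he]
    _ = b := hb1

end Aux

theorem myChar {A : Type*} [Mul A] (inv : A → A)
    (hAG : ∀ x y z : A, x * y * z = z * y * x)
    (hinv1 : ∀ a : A, (a * inv a) * a = a)
    (hinv2 : ∀ a : A, (inv a * a) * inv a = inv a)
    (hcomm : ∀ a : A, a * inv a = inv a * a)
    (r : A → A → Prop) (hequiv : Equivalence r)
    (hcompat : ∀ a b c d : A, r a b → r c d → r (a * c) (b * d)) :
    ∀ a b : A, r a b ↔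
      (r (a * inv a) (b * inv b) ∧ ∃ e : A, e * e = e ∧ r (a * inv b) e) := by
  letI s : Setoid A := ⟨r, hequiv⟩
  letI : Mul (Quotient s) := ⟨Quotient.map₂ (· * ·)
    (fun a₁ a₂ h₁ b₁ b₂ h₂ => hcompat a₁ a₂ b₁ b₂ h₁ h₂)⟩
  let mk : A → Quotient s := Quotient.mk s
  have hmk : ∀ p q : A, (mk p) * (mk q) = mk (p * q) := fun _ _ => rfl
  have hmQ : ∀ X Y Z : Quotient s, X * Y * Z = Z * Y * X := fun X Y Z =>
    Quotient.inductionOn₃ X Y Z (fun p q t => congrArg mk (hAG p q t))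
  have rinv : ∀ p q : A, r p q → r (inv p) (inv q) := by
    intro p q hpq
    have hq : mk p = mk q := Quotient.sound hpq
    refine Quotient.exact (myUniq hmQ (a := mk p) (x := mk (inv p)) (y := mk (inv q))
      ?_ ?_ ?_ ?_ ?_ ?_)
    · exact congrArg mk (hinv1 p)
    · exact congrArg mk (hinv2 p)
    · exact congrArg mk (hcomm p)
    · rw [hq]; exact congrArg mk (hinv1 q)
    · rw [hq]; exact congrArg mk (hinv2 q)
    · rw [hq]; exact congrArg mk (hcomm q)
  intro a b
  constructor
  · intro hab
    refine ⟨hcompat _ _ _ _ hab (rinv a b hab),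
      b * inv b, myIdem hAG (hinv1 b) (hcomm b),
      hcompat _ _ _ _ hab (hequiv.refl (inv b))⟩
  · rintro ⟨h1, e, hee, h2⟩
    have hq1 : (mk a) * (mk (inv a)) = (mk b) * (mk (inv b)) := Quotient.sound h1
    have hq2 : (mk a) * (mk (inv b)) = mk e := Quotient.sound h2
    have hg : ((mk a) * (mk (inv b))) * ((mk a) * (mk (inv b))) = (mk a) * (mk (inv b)) := by
      rw [hq2]; exact congrArg mk hee
    exact Quotient.exact (myKey hmQ (a := mk a) (x := mk (inv a)) (b := mk b) (y := mk (inv b))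
      (congrArg mk (hinv1 a)) (congrArg mk (hcomm a))
      (congrArg mk (hinv1 b)) (congrArg mk (hcomm b)) hq1 hg)

/-- A congruence on a completely inverse AG**-groupoid is determined by its kernel
and trace: `(a,b) ∈ ρ` iff `(a a⁻¹, b b⁻¹) ∈ ρ` and `a b⁻¹ ∈ ker ρ`; consequently
two congruences with the same kernel and trace coincide. -/
theorem congruence_kernel_trace {A : Type*} [Mul A] (inv : A → A)
(hAG : ∀ x y z : A, x * y * z = z * y * x)
    (hStar : ∀ x y z : A, x * (y * z) = y * (x * z))
    (hinv1 : ∀ a : A, (a * inv a) * a = a)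
    (hinv2 : ∀ a : A, (inv a * a) * inv a = inv a)
    (hcomm : ∀ a : A, a * inv a = inv a * a)
    (huniq : ∀ a b : A, (a * b) * a = a → (b * a) * b = b → b = inv a)
    (r : A → A → Prop) (hequiv : Equivalence r)
    (hcompat : ∀ a b c d : A, r a b → r c d → r (a * c) (b * d)) :
    (∀ a b : A, r a b ↔
      (r (a * inv a) (b * inv b) ∧ ∃ e : A, e * e = e ∧ r (a * inv b) e)) ∧
    (∀ r' : A → A → Prop, Equivalence r' →
      (∀ a b c d : A, r' a b → r' c d → r' (a * c) (b * d)) →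
      (∀ e f : A, e * e = e → f * f = f → (r e f ↔ r' e f)) →
      (∀ a : A, ∀ e : A, e * e = e → (r a e ↔ r' a e)) →
      ∀ a b : A, r a b ↔ r' a b) := by
  refine ⟨myChar inv hAG hinv1 hinv2 hcomm r hequiv hcompat, ?_⟩
  intro r' heq' hcomp' htrace hker a b
  rw [myChar inv hAG hinv1 hinv2 hcomm r hequiv hcompat a b,
      myChar inv hAG hinv1 hinv2 hcomm r' heq' hcomp' a b]
  have ia : (a * inv a) * (a * inv a) = a * inv a := myIdem hAG (hinv1 a) (hcomm a)
  have ib : (b * inv b) * (b * inv b) = b * inv b := myIdem hAG (hinv1 b) (hcomm b)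
  constructor
  · rintro ⟨h1, e, hee, h2⟩
    exact ⟨(htrace _ _ ia ib).1 h1, e, hee, (hker _ _ hee).1 h2⟩
  · rintro ⟨h1, e, hee, h2⟩
    exact ⟨(htrace _ _ ia ib).2 h1, e, hee, (hker _ _ hee).2 h2⟩
end

section
/- On a completely inverse AG**-groupoid A, the relation σ = {(a,b) : there exists an idempotent e with ea = eb} is the least congruence ρ on A such that the quotient A/ρ is an AG-group; moreover its kernel equals the closure E_Aω = {a ∈ A : ea is idempotent for some idempotent e}. -/
/-- On a completely inverse AG**-groupoid, `σ = {(a,b) : ∃ idempotent e, e*a = e*b}`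
is the least congruence whose quotient is an AG-group, and its kernel is the
closure `E_Aω = {a : ∃ idempotent e, e*a idempotent}`. -/
theorem sigma_least_ag_group_congruence {A : Type*} [Mul A] [Inhabited A] (inv : A → A)
(hAG : ∀ x y z : A, x * y * z = z * y * x)
    (hStar : ∀ x y z : A, x * (y * z) = y * (x * z))
    (hinv1 : ∀ a : A, (a * inv a) * a = a)
    (hinv2 : ∀ a : A, (inv a * a) * inv a = inv a)
    (hcomm : ∀ a : A, a * inv a = inv a * a)
    (huniq : ∀ a b : A, (a * b) * a = a → (b * a) * b = b → b = inv a)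
    :
    letI σ : A → A → Prop := fun a b => ∃ e : A, e * e = e ∧ e * a = e * b
    -- σ is a congruence
    (Equivalence σ) ∧
    (∀ a b c d : A, σ a b → σ c d → σ (a * c) (b * d)) ∧
    -- the quotient A/σ is an AG-group: some idempotent class is a left identity
    -- and every class has a left inverse class
    (∃ e : A, e * e = e ∧ (∀ b : A, σ (e * b) b) ∧ (∀ a : A, σ (inv a * a) e)) ∧
    -- σ is least among congruences whose quotient is an AG-group
    (∀ r : A → A → Prop, Equivalence r →
      (∀ a b c d : A, r a b → r c d → r (a * c) (b * d)) →
      (∃ u : A, (∀ b : A, r (u * b) b) ∧ (∀ a : A, ∃ x : A, r (x * a) u)) →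
      ∀ a b : A, σ a b → r a b) ∧
    -- kernel of σ equals the closure of the set of idempotents
    (∀ a : A, (∃ e : A, e * e = e ∧ σ a e) ↔
      (∃ e : A, e * e = e ∧ (e * a) * (e * a) = e * a)) := by
  -- medial law
  have hmed : ∀ a b c d : A, (a * b) * (c * d) = (a * c) * (b * d) := by
    intro a b c d
    calc (a * b) * (c * d) = ((c * d) * b) * a := hAG _ _ _
      _ = ((b * d) * c) * a := by rw [hAG c d b]
      _ = (a * c) * (b * d) := hAG _ _ _
  -- idempotents act idempotently
  have heex : ∀ e x : A, e * e = e → e * (e * x) = e * x := by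
    intro e x he
    have h1 : e * x = (x * e) * e := by rw [← hAG]; rw [he]
    calc e * (e * x) = e * ((x * e) * e) := by rw [← h1]
      _ = (x * e) * (e * e) := hStar _ _ _
      _ = (x * e) * e := by rw [he]
      _ = e * x := h1.symm
  -- key: (e*f)*x = f*(e*x) for e idempotent
  have hefx : ∀ e f x : A, e * e = e → (e * f) * x = f * (e * x) := by
    intro e f x he
    calc (e * f) * x = ((e * e) * f) * x := by rw [he]
      _ = ((f * e) * e) * x := by rw [hAG e e f]
      _ = (x * e) * (f * e) := hAG _ _ _
      _ = f * ((x * e) * e) := hStar _ _ _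
      _ = f * ((e * e) * x) := by rw [hAG x e e]
      _ = f * (e * x) := by rw [he]
  -- product of idempotents is idempotent
  have hprod : ∀ e f : A, e * e = e → f * f = f → (e * f) * (e * f) = e * f := by
    intro e f he hf
    rw [hmed, he, hf]
  -- idempotents commute
  have hcommE : ∀ e f : A, e * e = e → f * f = f → e * f = f * e := by
    intro e f he hf
    calc e * f = (e * e) * f := by rw [he]
      _ = (f * e) * e := hAG _ _ _
      _ = e * (f * e) := hefx f e e hf
      _ = f * (e * e) := hStar _ _ _
      _ = f * e := by rw [he]
  -- a * inv a is idempotent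
  have hidem : ∀ a : A, (a * inv a) * (a * inv a) = a * inv a := by
    intro a
    have h1 : (a * inv a) * inv a = inv a := by rw [hcomm]; exact hinv2 a
    calc (a * inv a) * (a * inv a) = a * ((a * inv a) * inv a) := hStar _ _ _
      _ = a * inv a := by rw [h1]
  set σ : A → A → Prop := fun a b => ∃ e : A, e * e = e ∧ e * a = e * b with hσ
  have hrefl : ∀ a : A, σ a a := by
    intro a
    exact ⟨default * inv default, hidem default, rfl⟩
  have hsymm : ∀ a b : A, σ a b → σ b a := by
    rintro a b ⟨e, he, hab⟩
    exact ⟨e, he, hab.symm⟩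
  have htrans : ∀ a b c : A, σ a b → σ b c → σ a c := by
    rintro a b c ⟨e, he, hab⟩ ⟨f, hf, hbc⟩
    refine ⟨e * f, hprod e f he hf, ?_⟩
    calc (e * f) * a = f * (e * a) := hefx e f a he
      _ = f * (e * b) := by rw [hab]
      _ = e * (f * b) := hStar _ _ _
      _ = e * (f * c) := by rw [hbc]
      _ = f * (e * c) := hStar _ _ _
      _ = (e * f) * c := (hefx e f c he).symm
  refine ⟨⟨hrefl, fun {a b} h => hsymm a b h, fun {a b c} h1 h2 => htrans a b c h1 h2⟩, ?_, ?_, ?_, ?_⟩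
  · -- congruence
    rintro a b c d ⟨e, he, hab⟩ ⟨f, hf, hcd⟩
    refine ⟨e * f, hprod e f he hf, ?_⟩
    calc (e * f) * (a * c) = (e * a) * (f * c) := hmed _ _ _ _
      _ = (e * b) * (f * d) := by rw [hab, hcd]
      _ = (e * f) * (b * d) := (hmed _ _ _ _).symm
  · -- left identity and inverses in the quotient
    refine ⟨default * inv default, hidem default, ?_, ?_⟩
    · intro b
      refine ⟨default * inv default, hidem default, ?_⟩
      exact heex _ b (hidem default)
    · intro a
      set e := default * inv default with hedef
      have he : e * e = e := hidem default
      have hf : (inv a * a) * (inv a * a) = inv a * a := by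
        rw [← hcomm]; exact hidem a
      set f := inv a * a with hfdef
      refine ⟨e * f, hprod e f he hf, ?_⟩
      calc (e * f) * f = f * (e * f) := hefx e f f he
        _ = e * (f * f) := hStar _ _ _
        _ = e * f := by rw [hf]
        _ = f * e := hcommE e f he hf
        _ = f * (e * e) := by rw [he]
        _ = (e * f) * e := (hefx e f e he).symm
  · -- leastness
    rintro r hr hm ⟨u, hu, hinvr⟩ a b ⟨e, he, hab⟩
    -- every idempotent is r-related to u
    have heu : r e u := by
      obtain ⟨x, hx⟩ := hinvr e
      have h1 : r (e * e) (u * e) := by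
        rw [he]; exact hr.symm (hu e)
      have h2 : r ((e * e) * x) ((u * e) * x) := hm _ _ _ _ h1 (hr.refl x)
      have h3 : r ((x * e) * e) ((x * e) * u) := by
        rwa [hAG e e x, hAG u e x] at h2
      have h4 : r ((x * e) * e) (u * e) := hm _ _ _ _ hx (hr.refl e)
      have h5 : r ((x * e) * u) (u * u) := hm _ _ _ _ hx (hr.refl u)
      have h6 : r ((x * e) * e) e := hr.trans h4 (hu e)
      exact hr.trans (hr.symm h6) (hr.trans h3 (hr.trans h5 (hu u)))
    have r1 : r a (u * a) := hr.symm (hu a)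
    have r2 : r (u * a) (e * a) := hm _ _ _ _ (hr.symm heu) (hr.refl a)
    have r3 : r (e * b) (u * b) := hm _ _ _ _ heu (hr.refl b)
    have r4 : r (u * b) b := hu b
    rw [hab] at r2
    exact hr.trans r1 (hr.trans r2 (hr.trans r3 r4))
  · -- kernel
    intro a
    constructor
    · rintro ⟨e, he, f, hf, hfa⟩
      refine ⟨f, hf, ?_⟩
      rw [hfa]
      exact hprod f e hf he
    · rintro ⟨e, he, hea⟩
      exact ⟨e * a, hea, e, he, (heex e a he).symm⟩
end
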